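/- Let E be a real inner product space, K a complete subspace of E with orthogonal projection P_K, s, n ∈ K with ⟨s, n⟩ = 0 and s ≠ 0, and a ∈ E with P_K a = 0 and a ≠ 0. Let ε ≥ 0, set ŝ = s + ε·n + a and y = s + n, and define SAR(x) = 10·log₁₀(‖P_K x‖² / ‖x − P_K x‖²) whenever P_K x ≠ 0 and x − P_K x ≠ 0. Then ⟨ŝ, y⟩ > 0, and consequently for every ω > 0, SAR(ŝ + ω·y) > SAR(ŝ). -/

import Mathlib

open scoped RealInnerProductSpace

/-- Signal-to-artifact ratio: `SAR(x) = 10·log₁₀(‖P_K x‖² / ‖x − P_K x‖²)`. -/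
noncomputable def SAR {E : Type*} [NormedAddCommGroup E] [InnerProductSpace ℝ E]
    (K : Submodule ℝ E) [CompleteSpace K] (x : E) : ℝ :=
  10 * Real.logb 10 (‖(Submodule.orthogonalProjectionOnto K x : E)‖ ^ 2 /
    ‖x - (Submodule.orthogonalProjectionOnto K x : E)‖ ^ 2)

/-- For an enhanced signal `ŝ = s + ε·n + a` with `s, n ∈ K` orthogonal, `s ≠ 0`,
artifact `a` orthogonal to `K` with `a ≠ 0`, and `ε ≥ 0`, the condition
`⟨ŝ, y⟩ > 0` holds for the observation `y = s + n`, and consequently observation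
adding strictly improves the SAR for every `ω > 0`. -/
theorem observation_adding_improves_SAR_of_model
    {E : Type*} [NormedAddCommGroup E] [InnerProductSpace ℝ E]
    (K : Submodule ℝ E) [CompleteSpace K]
    (s n a : E) (hs : s ∈ K) (hn : n ∈ K) (hsn : ⟪s, n⟫ = 0) (hs0 : s ≠ 0)
    (ha : (Submodule.orthogonalProjectionOnto K a : E) = 0) (ha0 : a ≠ 0)
    (ε : ℝ) (hε : ε ≥ 0) :
    ⟪s + ε • n + a, s + n⟫ > 0 ∧
    ∀ ω : ℝ, ω > 0 →
      SAR K ((s + ε • n + a) + ω • (s + n)) > SAR K (s + ε • n + a) := by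
  have haK : a ∈ Kᗮ := by
    have h := Submodule.sub_starProjection_mem_orthogonal (K := K) a
    rwa [Submodule.starProjection_apply, ha, sub_zero] at h
  have has : ⟪a, s⟫ = 0 := (Submodule.mem_orthogonal' K a).mp haK s hs
  have han : ⟪a, n⟫ = 0 := (Submodule.mem_orthogonal' K a).mp haK n hn
  have hns : ⟪n, s⟫ = 0 := by rw [real_inner_comm]; exact hsn
  have hs2 : (0:ℝ) < ‖s‖ ^ 2 := pow_pos (norm_pos_iff.mpr hs0) 2
  have ha2 : (0:ℝ) < ‖a‖ ^ 2 := pow_pos (norm_pos_iff.mpr ha0) 2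
  have hn2 : (0:ℝ) ≤ ‖n‖ ^ 2 := by positivity
  constructor
  · simp only [inner_add_left, inner_add_right, real_inner_smul_left, hsn, hns, has, han,
      real_inner_self_eq_norm_sq]
    nlinarith [mul_nonneg hε hn2]
  · intro ω hω
    have hP : ∀ c : ℝ, ((Submodule.orthogonalProjectionOnto K (s + c • n + a)) : E) = s + c • n := by
      intro c
      have hm : s + c • n ∈ K := K.add_mem hs (K.smul_mem c hn)
      rw [map_add, Submodule.coe_add,
        Submodule.coe_orthogonalProjectionOnto_apply K (s + c • n), K.starProjection_eq_self_iff.mpr hm, ha, add_zero]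
    have key : ∀ c : ℝ,
        SAR K (s + c • n + a) = 10 * Real.logb 10 (‖s + c • n‖ ^ 2 / ‖a‖ ^ 2) := by
      intro c
      rw [SAR, hP c, show s + c • n + a - (s + c • n) = a from by abel]
    have hre : (s + ε • n + a) + ω • (s + n) = s + ε • n + ω • s + ω • n + a := by
      rw [smul_add]; abel
    have hre2 : s + ε • n + ω • s + ω • n = (1 + ω) • s + (ε + ω) • n := by
      rw [add_smul, add_smul, one_smul]; abel
    have hP2 : ((Submodule.orthogonalProjectionOnto K ((s + ε • n + a) + ω • (s + n))) : E)
        = (1 + ω) • s + (ε + ω) • n := by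
      rw [hre, ← hre2]
      have hm : s + ε • n + ω • s + ω • n ∈ K :=
        K.add_mem (K.add_mem (K.add_mem hs (K.smul_mem ε hn)) (K.smul_mem ω hs))
          (K.smul_mem ω hn)
      rw [map_add, Submodule.coe_add,
        Submodule.coe_orthogonalProjectionOnto_apply K (s + ε • n + ω • s + ω • n),
        K.starProjection_eq_self_iff.mpr hm, ha, add_zero,
        hre2]
    have keyN : ∀ c d : ℝ, ‖c • s + d • n‖ ^ 2 = c ^ 2 * ‖s‖ ^ 2 + d ^ 2 * ‖n‖ ^ 2 := by
      intro c d
      rw [norm_add_sq_real, inner_smul_left, inner_smul_right, hsn, norm_smul, norm_smul,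
        mul_pow, mul_pow]
      simp [sq_abs, Real.norm_eq_abs]
    have hSAR2 : SAR K ((s + ε • n + a) + ω • (s + n))
        = 10 * Real.logb 10 (‖(1 + ω) • s + (ε + ω) • n‖ ^ 2 / ‖a‖ ^ 2) := by
      have hres : (s + ε • n + a) + ω • (s + n) - ((1 + ω) • s + (ε + ω) • n) = a := by
        rw [smul_add, add_smul, add_smul, one_smul]; abel
      rw [SAR, hP2, hres]
    have hSAR1 := key ε
    rw [hSAR1, hSAR2]
    have hN1 : ‖s + ε • n‖ ^ 2 = 1 ^ 2 * ‖s‖ ^ 2 + ε ^ 2 * ‖n‖ ^ 2 := by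
      have := keyN 1 ε; rwa [one_smul] at this
    have hlt : ‖s + ε • n‖ ^ 2 < ‖(1 + ω) • s + (ε + ω) • n‖ ^ 2 := by
      rw [hN1, keyN]
      nlinarith [mul_pos (mul_pos hω hω) hs2, mul_pos hs2 hω,
        mul_nonneg (mul_nonneg hε hω.le) hn2, mul_nonneg (mul_nonneg hω.le hω.le) hn2]
    have hpos : (0:ℝ) < ‖s + ε • n‖ ^ 2 := by rw [hN1]; nlinarith
    have hdiv : ‖s + ε • n‖ ^ 2 / ‖a‖ ^ 2 < ‖(1 + ω) • s + (ε + ω) • n‖ ^ 2 / ‖a‖ ^ 2 :=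
      div_lt_div_of_pos_right hlt ha2
    have := Real.logb_lt_logb (by norm_num : (1:ℝ) < 10) (div_pos hpos ha2) hdiv
    linarith
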